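/- arXiv:2102.00698 — 2 statements merged into one kernel-verified Lean document; each statement's English description precedes it below -/
import Mathlib

section
/- For every λ > 0 and every b ∈ ℝ^V there exists a unique g ∈ ℝ^V such that b ∈ {g + λh : h ∈ 𝓛(g)}; moreover this g is the unique minimizer over ℝ^V of the function g ↦ ‖b − g‖²/(2λ) + Q(D⁻¹g). -/
open scoped BigOperators

noncomputable section

namespace HypRicci

variable {V : Type*} [Fintype V] [DecidableEq V]

/-- A finite weighted hypergraph on vertex set `V`: a finite set of nonempty
hyperedges together with positive weights. -/
structure Hypergraph (V : Type*) [Fintype V] [DecidableEq V] : Type _ where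
  E : Finset (Finset V)
  w : Finset V → ℝ
  w_pos : ∀ e ∈ E, 0 < w e
  e_nonempty : ∀ e ∈ E, e.Nonempty

/-- Degree `d_x = ∑_{e ∋ x} w(e)`. -/
def deg (H : Hypergraph V) (x : V) : ℝ := ∑ e ∈ H.E, if x ∈ e then H.w e else 0

/-- Volume `vol(V) = ∑_x d_x`. -/
def vol (H : Hypergraph V) : ℝ := ∑ x, deg H x

/-- Weighted inner product `⟨f,g⟩ = ∑_x f(x) g(x) / d_x`. -/
def inn (H : Hypergraph V) (f g : V → ℝ) : ℝ := ∑ x, f x * g x / deg H x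

/-- Norm associated to `inn`. -/
def nrm (H : Hypergraph V) (f : V → ℝ) : ℝ := Real.sqrt (inn H f f)

/-- Indicator function `δ_x`. -/
def delta (x : V) : V → ℝ := fun z => if z = x then 1 else 0

/-- Standard (unweighted) dot product `u^⊤ v`. -/
def dot (u v : V → ℝ) : ℝ := ∑ x, u x * v x

/-- Base polytope `B_e = conv{δ_x − δ_y : x,y ∈ e}`. -/
def Bp (e : Finset V) : Set (V → ℝ) :=
  convexHull ℝ {b : V → ℝ | ∃ x ∈ e, ∃ y ∈ e, b = delta x - delta y}

/-- The multivalued hypergraph Laplacian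
`L(f) = {∑_e w(e) (b_e^⊤ f) b_e : b_e ∈ argmax_{b ∈ B_e} b^⊤ f}`. -/
def Lap (H : Hypergraph V) (f : V → ℝ) : Set (V → ℝ) :=
  { g | ∃ b : Finset V → (V → ℝ),
      (∀ e ∈ H.E, b e ∈ Bp e ∧ ∀ b' ∈ Bp e, dot b' f ≤ dot (b e) f) ∧
      g = ∑ e ∈ H.E, (H.w e * dot (b e) f) • b e }

/-- `D⁻¹ f`. -/
def Dinv (H : Hypergraph V) (f : V → ℝ) : V → ℝ := fun x => f x / deg H x

/-- Normalized Laplacian `𝓛(f) = L(D⁻¹ f)`. -/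
def NL (H : Hypergraph V) (f : V → ℝ) : Set (V → ℝ) := Lap H (Dinv H f)

/-- The resolvent `J_λ = (I + λ𝓛)⁻¹`: it sends `f` to the (unique) `g` with
`f ∈ g + λ 𝓛(g)`. -/
def Resolvent (H : Hypergraph V) (l : ℝ) (f : V → ℝ) : V → ℝ :=
  Classical.epsilon fun g => ∃ h ∈ NL H g, f = g + l • h

/-- Adjacency: `x ∼ y` iff some hyperedge contains both. -/
def Adj (H : Hypergraph V) (x y : V) : Prop := ∃ e ∈ H.E, x ∈ e ∧ y ∈ e

/-- There is a chain of length `n` of successively adjacent vertices from `x` to `y`. -/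
def chainProp (H : Hypergraph V) (x y : V) (n : ℕ) : Prop :=
  ∃ z : ℕ → V, z 0 = x ∧ z n = y ∧ ∀ i < n, Adj H (z i) (z (i + 1))

/-- Connectedness of the hypergraph. -/
def Connected (H : Hypergraph V) : Prop := ∀ x y : V, ∃ n, chainProp H x y n

/-- Graph distance (as a natural number). -/
def hdistN (H : Hypergraph V) (x y : V) : ℕ := sInf {n | chainProp H x y n}

/-- Graph distance `d(x,y)` as a real number. -/
def gdist (H : Hypergraph V) (x y : V) : ℝ := (hdistN H x y : ℝ)

/-- Diameter `diam(H) = max_{x,y} d(x,y)`. -/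
def hdiam (H : Hypergraph V) : ℝ :=
  (((Finset.univ : Finset (V × V)).sup fun p => hdistN H p.1 p.2 : ℕ) : ℝ)

/-- Weighted `1`-Lipschitz functions: `⟨f, δ_x − δ_y⟩ ≤ d(x,y)` for all `x, y`. -/
def Lip1 (H : Hypergraph V) : Set (V → ℝ) :=
  { f | ∀ x y : V, inn H f (delta x - delta y) ≤ gdist H x y }

/-- The `λ`-nonlinear Kantorovich difference. -/
def KD (H : Hypergraph V) (l : ℝ) (x y : V) : ℝ :=
  sSup { r | ∃ f ∈ Lip1 H, r = inn H (Resolvent H l f) (delta x - delta y) }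

/-- `κ_λ(x,y) = 1 − KD_λ(x,y)/d(x,y)`. -/
def kappa (H : Hypergraph V) (l : ℝ) (x y : V) : ℝ := 1 - KD H l x y / gdist H x y

/-- Lower coarse Ricci curvature `κ̲(x,y) = liminf_{λ↓0} κ_λ(x,y)/λ`. -/
def kappaLower (H : Hypergraph V) (x y : V) : EReal :=
  Filter.liminf (fun l : ℝ => ((kappa H l x y / l : ℝ) : EReal)) (nhdsWithin 0 (Set.Ioi 0))

/-- Upper coarse Ricci curvature `κ̄(x,y) = limsup_{λ↓0} κ_λ(x,y)/λ`. -/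
def kappaUpper (H : Hypergraph V) (x y : V) : EReal :=
  Filter.limsup (fun l : ℝ => ((kappa H l x y / l : ℝ) : EReal)) (nhdsWithin 0 (Set.Ioi 0))

/-- Canonical restriction `𝓛⁰ f`: the unique element of minimal norm of `𝓛(f)`. -/
def L0 (H : Hypergraph V) (f : V → ℝ) : V → ℝ :=
  Classical.epsilon fun g => g ∈ NL H f ∧ ∀ h ∈ NL H f, nrm H g ≤ nrm H h

/-- The stationary distribution `π(x) = d_x / vol(V)`. -/
def piH (H : Hypergraph V) : V → ℝ := fun x => deg H x / vol H

/-- The energy `Q(h) = (1/2) ∑_e w(e) max_{x,y ∈ e} (h(x) − h(y))²`. -/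
def Qform (H : Hypergraph V) (h : V → ℝ) : ℝ :=
  (1 / 2) * ∑ e ∈ H.E, H.w e * sSup { r | ∃ x ∈ e, ∃ y ∈ e, r = (h x - h y) ^ 2 }


section Aux
set_option linter.unusedSectionVars false

variable {H : Hypergraph V}

lemma dot_sum {ι : Type*} (A : Finset ι) (s : ι → V → ℝ) (u : V → ℝ) :
    dot (∑ i ∈ A, s i) u = ∑ i ∈ A, dot (s i) u := by
  simp only [dot, Finset.sum_apply, Finset.sum_mul]
  exact Finset.sum_comm

lemma dot_smul (r : ℝ) (c u : V → ℝ) : dot (r • c) u = r * dot c u := by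
  simp [dot, Finset.mul_sum, mul_assoc]

lemma dot_add (a c u : V → ℝ) : dot (a + c) u = dot a u + dot c u := by
  simp [dot, add_mul, Finset.sum_add_distrib]

lemma dot_delta_sub (x y : V) (f : V → ℝ) : dot (delta x - delta y) f = f x - f y := by
  simp only [dot, delta, Pi.sub_apply, sub_mul, Finset.sum_sub_distrib, ite_mul, one_mul,
    zero_mul]
  rw [Finset.sum_ite_eq', Finset.sum_ite_eq']
  simp

/-- The maximum difference over a hyperedge. -/
def Me (e : Finset V) (h : V → ℝ) : ℝ := sSup {r | ∃ x ∈ e, ∃ y ∈ e, r = h x - h y}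

lemma Me_set_eq (e : Finset V) (h : V → ℝ) :
    {r | ∃ x ∈ e, ∃ y ∈ e, r = h x - h y}
      = (fun p : V × V => h p.1 - h p.2) '' ↑(e ×ˢ e) := by
  ext r
  simp only [Set.mem_setOf_eq, Set.mem_image, Finset.coe_product, Set.mem_prod,
    Finset.mem_coe]
  constructor
  · rintro ⟨x, hx, y, hy, rfl⟩; exact ⟨(x, y), ⟨hx, hy⟩, rfl⟩
  · rintro ⟨⟨x, y⟩, ⟨hx, hy⟩, rfl⟩; exact ⟨x, hx, y, hy, rfl⟩

lemma Me_eq_sup' {e : Finset V} (he : e.Nonempty) (h : V → ℝ) :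
    Me e h = (e ×ˢ e).sup' (he.product he) (fun p => h p.1 - h p.2) := by
  rw [Me, Me_set_eq, Finset.sup'_eq_csSup_image]

lemma sub_le_Me {e : Finset V} {x y : V} (hx : x ∈ e) (hy : y ∈ e) (h : V → ℝ) :
    h x - h y ≤ Me e h := by
  rw [Me_eq_sup' ⟨x, hx⟩ h]
  exact Finset.le_sup' (fun p : V × V => h p.1 - h p.2) (Finset.mk_mem_product hx hy)

lemma Me_nonneg {e : Finset V} (he : e.Nonempty) (h : V → ℝ) : 0 ≤ Me e h := by
  obtain ⟨z, hz⟩ := he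
  simpa using sub_le_Me hz hz h

lemma exists_Me_pair {e : Finset V} (he : e.Nonempty) (h : V → ℝ) :
    ∃ x ∈ e, ∃ y ∈ e, Me e h = h x - h y := by
  obtain ⟨⟨x, y⟩, hmem, heq⟩ := Finset.exists_mem_eq_sup' (he.product he)
    (fun p : V × V => h p.1 - h p.2)
  rw [Finset.mem_product] at hmem
  exact ⟨x, hmem.1, y, hmem.2, by rw [Me_eq_sup' he, heq]⟩

lemma Qform_eq (H : Hypergraph V) (h : V → ℝ) :
    Qform H h = (1 / 2) * ∑ e ∈ H.E, H.w e * (Me e h) ^ 2 := by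
  unfold Qform
  congr 1
  refine Finset.sum_congr rfl fun e heE => ?_
  congr 1
  have he : e.Nonempty := H.e_nonempty e heE
  have hset : {r | ∃ x ∈ e, ∃ y ∈ e, r = (h x - h y) ^ 2}
      = (fun p : V × V => (h p.1 - h p.2) ^ 2) '' ↑(e ×ˢ e) := by
    ext r
    simp only [Set.mem_setOf_eq, Set.mem_image, Finset.coe_product, Set.mem_prod,
      Finset.mem_coe]
    constructor
    · rintro ⟨x, hx, y, hy, rfl⟩; exact ⟨(x, y), ⟨hx, hy⟩, rfl⟩
    · rintro ⟨⟨x, y⟩, ⟨hx, hy⟩, rfl⟩; exact ⟨x, hx, y, hy, rfl⟩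
  rw [hset, ← Finset.sup'_eq_csSup_image _ (he.product he)]
  apply le_antisymm
  · apply Finset.sup'_le
    rintro ⟨x, y⟩ hmem
    rw [Finset.mem_product] at hmem
    have h1 := sub_le_Me hmem.1 hmem.2 h
    have h2 := sub_le_Me hmem.2 hmem.1 h
    have := Me_nonneg he h
    nlinarith
  · obtain ⟨x, hx, y, hy, heq⟩ := exists_Me_pair he h
    rw [heq]
    exact Finset.le_sup' (fun p : V × V => (h p.1 - h p.2) ^ 2) (Finset.mk_mem_product hx hy)

lemma pair_mem_Bp {e : Finset V} {x y : V} (hx : x ∈ e) (hy : y ∈ e) :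
    delta x - delta y ∈ Bp e :=
  subset_convexHull ℝ _ ⟨x, hx, y, hy, rfl⟩

lemma dot_isLinear (f : V → ℝ) : IsLinearMap ℝ (fun c : V → ℝ => dot c f) :=
  ⟨fun a c => dot_add a c f, fun r c => by simpa [smul_eq_mul] using dot_smul r c f⟩

lemma dot_le_Me {e : Finset V} (c : V → ℝ) (hc : c ∈ Bp e) (f : V → ℝ) :
    dot c f ≤ Me e f := by
  have hsub : Bp e ⊆ {c : V → ℝ | dot c f ≤ Me e f} := by
    apply convexHull_min ?_ (convex_halfSpace_le (dot_isLinear f) _)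
    rintro _ ⟨x, hx, y, hy, rfl⟩
    rw [Set.mem_setOf_eq, dot_delta_sub]
    exact sub_le_Me hx hy f
  exact hsub hc

end Aux
section Aux2
set_option linter.unusedSectionVars false
variable {H : Hypergraph V}

lemma inn_nonneg (hdeg : ∀ x : V, 0 < deg H x) (f : V → ℝ) : 0 ≤ inn H f f :=
  Finset.sum_nonneg fun x _ => div_nonneg (mul_self_nonneg _) (hdeg x).le

lemma nrm_sq_eq (hdeg : ∀ x : V, 0 < deg H x) (f : V → ℝ) : nrm H f ^ 2 = inn H f f :=
  Real.sq_sqrt (inn_nonneg hdeg f)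

lemma inn_pos (hdeg : ∀ x : V, 0 < deg H x) {f : V → ℝ} (hf : f ≠ 0) : 0 < inn H f f := by
  obtain ⟨x, hx⟩ : ∃ x, f x ≠ 0 := by
    by_contra hc; push_neg at hc; exact hf (funext hc)
  apply Finset.sum_pos' (fun y _ => div_nonneg (mul_self_nonneg _) (hdeg y).le)
  exact ⟨x, Finset.mem_univ x, div_pos (mul_self_pos.2 hx) (hdeg x)⟩

lemma inn_smul_sub (l : ℝ) (h u : V → ℝ) :
    inn H (l • h - u) (l • h - u)
      = l ^ 2 * inn H h h - 2 * l * inn H h u + inn H u u := by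
  unfold inn
  rw [Finset.mul_sum, Finset.mul_sum, ← Finset.sum_sub_distrib, ← Finset.sum_add_distrib]
  refine Finset.sum_congr rfl fun x _ => ?_
  simp only [Pi.sub_apply, Pi.smul_apply, smul_eq_mul]
  ring

lemma inn_add_smul (t : ℝ) (a c : V → ℝ) :
    inn H (a + t • c) (a + t • c)
      = inn H a a + 2 * t * inn H a c + t ^ 2 * inn H c c := by
  unfold inn
  rw [Finset.mul_sum, Finset.mul_sum, ← Finset.sum_add_distrib, ← Finset.sum_add_distrib]
  refine Finset.sum_congr rfl fun x _ => ?_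
  simp only [Pi.add_apply, Pi.smul_apply, smul_eq_mul]
  ring

lemma dot_sub_right (c a b : V → ℝ) : dot c (a - b) = dot c a - dot c b := by
  simp [dot, mul_sub, Finset.sum_sub_distrib]

lemma inn_smul_self (l : ℝ) (h : V → ℝ) :
    inn H (l • h) (l • h) = l ^ 2 * inn H h h := by
  unfold inn
  rw [Finset.mul_sum]
  refine Finset.sum_congr rfl fun x _ => ?_
  simp only [Pi.smul_apply, smul_eq_mul]
  ring

lemma dot_Dinv (c u : V → ℝ) : dot c (Dinv H u) = inn H c u := by
  unfold dot Dinv inn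
  exact Finset.sum_congr rfl fun x _ => by rw [mul_div_assoc]

/-- The objective functional. -/
def Ffun (H : Hypergraph V) (l : ℝ) (b g : V → ℝ) : ℝ :=
  nrm H (b - g) ^ 2 / (2 * l) + Qform H (Dinv H g)

/-- The subgradient inequality: if `b = g + l•h` with `h ∈ 𝓛(g)`, then `g` is the strict
minimizer of `Ffun`. -/
lemma resolvent_min (hdeg : ∀ x : V, 0 < deg H x) {l : ℝ} (hl : 0 < l)
    {b g h : V → ℝ} (hh : h ∈ NL H g) (hb : b = g + l • h)
    {g' : V → ℝ} (hne : g' ≠ g) :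
    Ffun H l b g < Ffun H l b g' := by
  obtain ⟨c, hc, hrep⟩ := hh
  set f : V → ℝ := Dinv H g with hf
  set f' : V → ℝ := Dinv H g' with hf'
  have key : ∀ e ∈ H.E, dot (c e) f = Me e f := by
    intro e he
    obtain ⟨x, hx, y, hy, hMe⟩ := exists_Me_pair (H.e_nonempty e he) f
    refine le_antisymm (dot_le_Me _ (hc e he).1 f) ?_
    rw [hMe, ← dot_delta_sub x y f]
    exact (hc e he).2 _ (pair_mem_Bp hx hy)
  -- dot h (f' - f) ≤ Q(f') - Q(f)
  have hdot : dot h (f' - f) = ∑ e ∈ H.E, (H.w e * dot (c e) f) * dot (c e) (f' - f) := by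
    rw [hrep, dot_sum]
    exact Finset.sum_congr rfl fun e _ => dot_smul _ _ _
  have hQ : dot h (f' - f) ≤ Qform H f' - Qform H f := by
    rw [hdot, Qform_eq H f', Qform_eq H f, Finset.mul_sum, Finset.mul_sum,
      ← Finset.sum_sub_distrib]
    refine Finset.sum_le_sum fun e he => ?_
    have hw := H.w_pos e he
    have hcf := key e he
    have h1 : dot (c e) f' ≤ Me e f' := dot_le_Me _ (hc e he).1 f'
    have h2 : dot (c e) (f' - f) = dot (c e) f' - dot (c e) f := dot_sub_right _ _ _
    have h0 : 0 ≤ Me e f := Me_nonneg (H.e_nonempty e he) f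
    rw [h2, hcf]
    have hMM : Me e f * dot (c e) f' ≤ Me e f * Me e f' := mul_le_mul_of_nonneg_left h1 h0
    nlinarith [mul_le_mul_of_nonneg_left hMM hw.le,
      mul_nonneg hw.le (sq_nonneg (Me e f' - Me e f))]
  -- inner product identity
  have hinn : dot h (f' - f) = inn H h (g' - g) := by
    have : f' - f = Dinv H (g' - g) := by
      funext x
      simp only [hf, hf', Dinv, Pi.sub_apply, sub_div]
    rw [this, dot_Dinv]
  -- quadratic expansion
  have hbg : b - g = l • h := by rw [hb]; abel
  have hbg' : b - g' = l • h - (g' - g) := by rw [hb]; abel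
  have hq1 : nrm H (b - g) ^ 2 = l ^ 2 * inn H h h := by
    rw [nrm_sq_eq hdeg, hbg, inn_smul_self]
  have hq2 : nrm H (b - g') ^ 2
      = l ^ 2 * inn H h h - 2 * l * inn H h (g' - g) + inn H (g' - g) (g' - g) := by
    rw [nrm_sq_eq hdeg, hbg', inn_smul_sub]
  have hpos : 0 < inn H (g' - g) (g' - g) :=
    inn_pos hdeg (sub_ne_zero.2 hne)
  have hQ' : inn H h (g' - g) ≤ Qform H f' - Qform H f := by rw [← hinn]; exact hQ
  unfold Ffun
  rw [hq1, hq2, ← hf, ← hf']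
  have h2l : 0 < 2 * l := by linarith
  have e1 : (l ^ 2 * inn H h h - 2 * l * inn H h (g' - g) + inn H (g' - g) (g' - g)) / (2 * l)
      = l ^ 2 * inn H h h / (2 * l) - inn H h (g' - g) + inn H (g' - g) (g' - g) / (2 * l) := by
    field_simp
  rw [e1]
  have h3 : 0 < inn H (g' - g) (g' - g) / (2 * l) := div_pos hpos h2l
  linarith

end Aux2
section Aux3
set_option linter.unusedSectionVars false
variable {H : Hypergraph V}

lemma continuous_finset_sup' {ι : Type*} {s : Finset ι} (hs : s.Nonempty)
    {X : Type*} [TopologicalSpace X] (φ : ι → X → ℝ) (hφ : ∀ i, Continuous (φ i)) :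
    Continuous fun g => s.sup' hs fun i => φ i g := by
  induction hs using Finset.Nonempty.cons_induction with
  | singleton a => simpa using hφ a
  | cons a s ha hs ih =>
      have : (fun g => (Finset.cons a s ha).sup' (Finset.cons_nonempty ha)
          fun i => φ i g) = fun g => max (φ a g) (s.sup' hs fun i => φ i g) := by
        funext g; exact Finset.sup'_cons (f := fun i => φ i g) hs
      rw [this]
      exact (hφ a).max ih

lemma continuous_Ffun (hdeg : ∀ x : V, 0 < deg H x) {l : ℝ} (hl : 0 < l) (b : V → ℝ) :
    Continuous (Ffun H l b) := by
  have h1 : Continuous fun g : V → ℝ => nrm H (b - g) ^ 2 / (2 * l) := by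
    have : (fun g : V → ℝ => nrm H (b - g) ^ 2 / (2 * l))
        = fun g : V → ℝ =>
            (∑ x : V, (b x - g x) * (b x - g x) / deg H x) / (2 * l) := by
      funext g
      rw [nrm_sq_eq hdeg]
      rfl
    rw [this]
    refine Continuous.div_const ?_ _
    refine continuous_finset_sum _ fun x _ => ?_
    exact (((continuous_const.sub (continuous_apply x)).mul
      (continuous_const.sub (continuous_apply x))).div_const _)
  have h2 : Continuous fun g : V → ℝ => Qform H (Dinv H g) := by
    have : (fun g : V → ℝ => Qform H (Dinv H g))
        = fun g : V → ℝ => (1 / 2) * ∑ e ∈ H.E, H.w e * (Me e (Dinv H g)) ^ 2 := by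
      funext g; exact Qform_eq H _
    rw [this]
    refine continuous_const.mul (continuous_finset_sum _ fun e he => ?_)
    refine continuous_const.mul (Continuous.pow ?_ 2)
    have he' : e.Nonempty := H.e_nonempty e he
    have : (fun g : V → ℝ => Me e (Dinv H g))
        = fun g => (e ×ˢ e).sup' (he'.product he')
            fun p => g p.1 / deg H p.1 - g p.2 / deg H p.2 := by
      funext g; exact Me_eq_sup' he' _
    rw [this]
    exact continuous_finset_sup' _ _ fun p =>
      ((continuous_apply p.1).div_const _).sub ((continuous_apply p.2).div_const _)
  exact h1.add h2

lemma Qform_nonneg (H : Hypergraph V) (h : V → ℝ) : 0 ≤ Qform H h := by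
  rw [Qform_eq]
  exact mul_nonneg (by norm_num) (Finset.sum_nonneg fun e he =>
    mul_nonneg (H.w_pos e he).le (sq_nonneg _))

lemma exists_global_min [Nonempty V] (hdeg : ∀ x : V, 0 < deg H x) {l : ℝ} (hl : 0 < l)
    (b : V → ℝ) : ∃ g : V → ℝ, ∀ g', Ffun H l b g ≤ Ffun H l b g' := by
  classical
  set m : ℝ := Ffun H l b b with hm
  have hm0 : 0 ≤ m := by
    have := Qform_nonneg H (Dinv H b)
    have h0 : 0 ≤ nrm H (b - b) ^ 2 / (2 * l) :=
      div_nonneg (sq_nonneg _) (by linarith)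
    unfold Ffun at hm; linarith [hm.ge]
  set dmax : ℝ := Finset.univ.sup' Finset.univ_nonempty (deg H) with hdmax
  have hdmax_pos : 0 < dmax := lt_of_lt_of_le (hdeg (Classical.arbitrary V))
    (Finset.le_sup' (deg H) (Finset.mem_univ _))
  set R : ℝ := Real.sqrt (dmax * (2 * l * (m + 1))) with hR
  have hR0 : 0 ≤ R := Real.sqrt_nonneg _
  -- sublevel set is in the closed ball
  have hball : ∀ g : V → ℝ, Ffun H l b g ≤ m → dist g b ≤ R := by
    intro g hg
    rw [dist_pi_le_iff hR0]
    intro x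
    have hinn_le : inn H (b - g) (b - g) ≤ 2 * l * (m + 1) := by
      have h1 : nrm H (b - g) ^ 2 / (2 * l) ≤ m := by
        have := Qform_nonneg H (Dinv H g)
        unfold Ffun at hg; linarith
      rw [nrm_sq_eq hdeg] at h1
      have h2l : (0:ℝ) < 2 * l := by linarith
      calc inn H (b - g) (b - g) ≤ 2 * l * m := by
            rw [div_le_iff₀ h2l] at h1; linarith
        _ ≤ 2 * l * (m + 1) := by nlinarith
    have hterm : (b x - g x) * (b x - g x) / deg H x ≤ inn H (b - g) (b - g) := by
      refine Finset.single_le_sum (f := fun y => (b y - g y) * (b y - g y) / deg H y)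
        (fun y _ => div_nonneg (mul_self_nonneg _) (hdeg y).le) (Finset.mem_univ x)
    have hsq : (g x - b x) ^ 2 ≤ dmax * (2 * l * (m + 1)) := by
      have hdx : deg H x ≤ dmax := Finset.le_sup' (deg H) (Finset.mem_univ x)
      have h3 : (b x - g x) * (b x - g x) ≤ inn H (b - g) (b - g) * deg H x :=
        (div_le_iff₀ (hdeg x)).1 hterm
      have h4 : 0 ≤ inn H (b - g) (b - g) := inn_nonneg hdeg _
      nlinarith [mul_le_mul_of_nonneg_left hdx h4,
        mul_le_mul_of_nonneg_right hinn_le hdmax_pos.le]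
    have : |g x - b x| ≤ R := by
      rw [hR, ← Real.sqrt_sq_eq_abs]
      exact Real.sqrt_le_sqrt hsq
    rwa [Real.dist_eq]
  have hcomp : IsCompact (Metric.closedBall b R) := isCompact_closedBall b R
  have hne : (Metric.closedBall b R).Nonempty := ⟨b, Metric.mem_closedBall_self hR0⟩
  obtain ⟨g, hgmem, hgmin⟩ := hcomp.exists_isMinOn hne
    ((continuous_Ffun hdeg hl b).continuousOn)
  refine ⟨g, fun g' => ?_⟩
  by_contra hcon
  push_neg at hcon
  have hg'm : Ffun H l b g' ≤ m := by
    have : Ffun H l b g ≤ m := hgmin (Metric.mem_closedBall_self hR0)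
    linarith
  have : g' ∈ Metric.closedBall b R := by
    rw [Metric.mem_closedBall]
    exact hball g' hg'm
  exact absurd (hgmin this) (not_le.2 hcon)

end Aux3
section Aux4
open scoped Pointwise
set_option linter.unusedSectionVars false
variable {H : Hypergraph V}

/-- The argmax face of the base polytope. -/
def Face (e : Finset V) (f : V → ℝ) : Set (V → ℝ) :=
  {c | c ∈ Bp e ∧ dot c f = Me e f}

lemma continuous_dot (f : V → ℝ) : Continuous fun c : V → ℝ => dot c f :=
  continuous_finset_sum _ fun x _ => (continuous_apply x).mul continuous_const

lemma Bp_isCompact (e : Finset V) : IsCompact (Bp e) := by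
  have hfin : {b : V → ℝ | ∃ x ∈ e, ∃ y ∈ e, b = delta x - delta y}.Finite := by
    have : {b : V → ℝ | ∃ x ∈ e, ∃ y ∈ e, b = delta x - delta y}
        = (fun p : V × V => delta p.1 - delta p.2) '' ↑(e ×ˢ e) := by
      ext b
      simp only [Set.mem_setOf_eq, Set.mem_image, Finset.coe_product, Set.mem_prod,
        Finset.mem_coe]
      constructor
      · rintro ⟨x, hx, y, hy, rfl⟩; exact ⟨(x, y), ⟨hx, hy⟩, rfl⟩
      · rintro ⟨⟨x, y⟩, ⟨hx, hy⟩, rfl⟩; exact ⟨x, hx, y, hy, rfl⟩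
    rw [this]
    exact ((e ×ˢ e).finite_toSet).image _
  exact hfin.isCompact_convexHull ℝ

lemma Face_isCompact (e : Finset V) (f : V → ℝ) : IsCompact (Face e f) :=
  (Bp_isCompact e).inter_right (isClosed_eq (continuous_dot f) continuous_const)

lemma Face_convex (e : Finset V) (f : V → ℝ) : Convex ℝ (Face e f) :=
  (convex_convexHull ℝ _).inter (convex_hyperplane (dot_isLinear f) _)

/-- Sums over selections from the faces. -/
def selSum (H : Hypergraph V) (f : V → ℝ) (A : Finset (Finset V)) : Set (V → ℝ) :=
  {s | ∃ c : Finset V → (V → ℝ), (∀ e ∈ A, c e ∈ Face e f) ∧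
      s = ∑ e ∈ A, (H.w e * Me e f) • c e}

lemma selSum_insert (f : V → ℝ) {A : Finset (Finset V)} {e : Finset V} (he : e ∉ A) :
    selSum H f (insert e A) = (H.w e * Me e f) • Face e f + selSum H f A := by
  ext s
  constructor
  · rintro ⟨c, hc, rfl⟩
    rw [Finset.sum_insert he]
    refine Set.mem_add.2 ⟨_, Set.smul_mem_smul_set (hc e (Finset.mem_insert_self e A)), _,
      ⟨c, fun e' he' => hc e' (Finset.mem_insert_of_mem he'), rfl⟩, rfl⟩
  · rintro ⟨_, ⟨c₀, hc₀, rfl⟩, _, ⟨c, hc, rfl⟩, rfl⟩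
    refine ⟨Function.update c e c₀, ?_, ?_⟩
    · intro e' he'
      rcases Finset.mem_insert.1 he' with rfl | he''
      · rw [Function.update_self]; exact hc₀
      · rw [Function.update_of_ne (ne_of_mem_of_not_mem he'' he)]
        exact hc e' he''
    · rw [Finset.sum_insert he, Function.update_self]
      have hsum : ∑ e' ∈ A, (H.w e' * Me e' f) • Function.update c e c₀ e'
          = ∑ e' ∈ A, (H.w e' * Me e' f) • c e' :=
        Finset.sum_congr rfl fun e' he' => by
          rw [Function.update_of_ne (ne_of_mem_of_not_mem he' he)]
      rw [hsum]

lemma selSum_convex_compact (f : V → ℝ) (A : Finset (Finset V)) :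
    Convex ℝ (selSum H f A) ∧ IsCompact (selSum H f A) := by
  classical
  induction A using Finset.induction with
  | empty =>
      have : selSum H f ∅ = {0} := by
        ext s
        simp only [selSum, Finset.notMem_empty, IsEmpty.forall_iff, forall_const,
          Finset.sum_empty, true_and, Set.mem_setOf_eq, Set.mem_singleton_iff]
        exact ⟨fun ⟨c, h⟩ => h, fun h => ⟨fun _ => 0, h⟩⟩
      rw [this]
      exact ⟨convex_singleton 0, isCompact_singleton⟩
  | insert _ _ he ih =>
      rw [selSum_insert f he]
      constructor
      · exact (((Face_convex _ f)).smul _).add ih.1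
      · exact (((Face_isCompact _ f)).smul _).add ih.2

end Aux4
section Aux5
set_option linter.unusedSectionVars false
variable {H : Hypergraph V}

lemma exists_uniform {ι : Type*} (s : Finset ι) (P : ι → ℝ → Prop)
    (h : ∀ i ∈ s, ∃ a > 0, ∀ t, 0 < t → t ≤ a → P i t) :
    ∃ a > 0, ∀ t, 0 < t → t ≤ a → ∀ i ∈ s, P i t := by
  classical
  induction s using Finset.induction with
  | empty => exact ⟨1, one_pos, fun t _ _ i hi => absurd hi (Finset.notMem_empty i)⟩
  | @insert j s hnotmem ih =>
      obtain ⟨a₁, ha₁, h₁⟩ := h _ (Finset.mem_insert_self _ _)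
      obtain ⟨a₂, ha₂, h₂⟩ := ih fun i hi => h i (Finset.mem_insert_of_mem hi)
      refine ⟨min a₁ a₂, lt_min ha₁ ha₂, fun t ht hta i hi => ?_⟩
      rcases Finset.mem_insert.1 hi with rfl | hi'
      · exact h₁ t ht (hta.trans (min_le_left _ _))
      · exact h₂ t ht (hta.trans (min_le_right _ _)) i hi'

lemma clm_eq_dot (L : (V → ℝ) →L[ℝ] ℝ) (u : V → ℝ) :
    L u = dot u (fun x => L (delta x)) := by
  have hu : u = ∑ x : V, u x • delta x := by
    funext z
    simp only [Finset.sum_apply, Pi.smul_apply, delta, smul_eq_mul, mul_ite, mul_one,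
      mul_zero]
    rw [Finset.sum_ite_eq Finset.univ z u]
    simp
  conv_lhs => rw [hu]
  rw [map_sum]
  unfold dot
  refine Finset.sum_congr rfl fun x _ => ?_
  rw [map_smul, smul_eq_mul]

lemma danskin_bound {e : Finset V} (he : e.Nonempty) (f v : V → ℝ) {x₀ y₀ : V}
    (hx₀ : x₀ ∈ e) (hy₀ : y₀ ∈ e) (hmax : f x₀ - f y₀ = Me e f)
    (hmin : ∀ x ∈ e, ∀ y ∈ e, f x - f y = Me e f → v x₀ - v y₀ ≤ v x - v y) :
    ∃ a > 0, ∀ t, 0 < t → t ≤ a →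
      Me e (f - t • v) ≤ Me e f - t * (v x₀ - v y₀) := by
  classical
  set m : ℝ := v x₀ - v y₀ with hm
  set Cv : ℝ := (e ×ˢ e).sup' (he.product he) (fun q : V × V => |v q.1 - v q.2|) with hCv
  have hCv0 : 0 ≤ Cv := le_trans (abs_nonneg _)
    (Finset.le_sup' (fun q : V × V => |v q.1 - v q.2|) (Finset.mk_mem_product hx₀ hy₀))
  set B : Finset (V × V) := (e ×ˢ e).filter (fun q => ¬ (f q.1 - f q.2 = Me e f)) with hB
  have key : ∀ a, 0 < a →
      (∀ q ∈ B, ∀ t, 0 < t → t ≤ a →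
        (f q.1 - f q.2) - t * (v q.1 - v q.2) ≤ Me e f - t * m) →
      ∀ t, 0 < t → t ≤ a → Me e (f - t • v) ≤ Me e f - t * m := by
    intro a _ hB' t ht hta
    rw [Me_eq_sup' he]
    apply Finset.sup'_le
    rintro ⟨x, y⟩ hq
    simp only [Pi.sub_apply, Pi.smul_apply, smul_eq_mul]
    by_cases hcase : f x - f y = Me e f
    · have h4 := hmin x (Finset.mem_product.1 hq).1 y (Finset.mem_product.1 hq).2 hcase
      have h5 : t * m ≤ t * (v x - v y) := mul_le_mul_of_nonneg_left h4 ht.le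
      linarith
    · have h6 := hB' (x, y) (Finset.mem_filter.2 ⟨hq, hcase⟩) t ht hta
      linarith
  by_cases hBne : B.Nonempty
  · set δ : ℝ := B.inf' hBne (fun q : V × V => Me e f - (f q.1 - f q.2)) with hδ
    have hδpos : 0 < δ := by
      rw [hδ, Finset.lt_inf'_iff]
      rintro q hq
      rw [hB, Finset.mem_filter] at hq
      have h1 := sub_le_Me (Finset.mem_product.1 hq.1).1 (Finset.mem_product.1 hq.1).2 f
      exact sub_pos.2 (lt_of_le_of_ne h1 hq.2)
    have hden : (0:ℝ) < Cv + |m| + 1 := by positivity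
    refine ⟨δ / (Cv + |m| + 1), div_pos hδpos hden, key _ (div_pos hδpos hden) ?_⟩
    rintro ⟨x, y⟩ hq t ht hta
    have hfd : f x - f y ≤ Me e f - δ := by
      have h1 : δ ≤ Me e f - (f x - f y) :=
        Finset.inf'_le (fun q : V × V => Me e f - (f q.1 - f q.2)) hq
      linarith
    have hvq : |v x - v y| ≤ Cv := by
      rw [hB, Finset.mem_filter] at hq
      exact Finset.le_sup' (fun q : V × V => |v q.1 - v q.2|) hq.1
    have h2 : t * (-(v x - v y)) ≤ t * Cv :=
      mul_le_mul_of_nonneg_left (le_trans (neg_le_abs _) hvq) ht.le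
    have h3 : t * m ≤ t * |m| := mul_le_mul_of_nonneg_left (le_abs_self m) ht.le
    have hta' : t * (Cv + |m| + 1) ≤ δ := (le_div_iff₀ hden).1 hta
    nlinarith
  · rw [Finset.not_nonempty_iff_eq_empty] at hBne
    refine ⟨1, one_pos, key 1 one_pos ?_⟩
    intro q hqB
    rw [hBne] at hqB
    exact absurd hqB (Finset.notMem_empty q)

end Aux5
section Aux6
set_option linter.unusedSectionVars false
variable {H : Hypergraph V}

lemma aux_contra {a b c : ℝ} (h3 : 0 < a * a) (h2 : a * (a * (c + 1)) ≤ a * b)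
    (h1 : 0 ≤ -(a * b) + a ^ 2 * c) : False := by nlinarith

lemma min_is_resolvent [Nonempty V] (hdeg : ∀ x : V, 0 < deg H x) {l : ℝ} (hl : 0 < l)
    (b g : V → ℝ) (hmin : ∀ g', Ffun H l b g ≤ Ffun H l b g') :
    ∃ h ∈ NL H g, b = g + l • h := by
  classical
  set f : V → ℝ := Dinv H g with hf
  set p : V → ℝ := l⁻¹ • (b - g) with hp
  by_cases hpS : p ∈ selSum H f H.E
  · obtain ⟨c, hc, hrep⟩ := hpS
    refine ⟨∑ e ∈ H.E, (H.w e * Me e f) • c e, ?_, ?_⟩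
    · refine ⟨c, fun e he => ⟨(hc e he).1, fun b' hb' => by
        rw [(hc e he).2]; exact dot_le_Me b' hb' f⟩, ?_⟩
      exact Finset.sum_congr rfl fun e he => by rw [(hc e he).2]
    · have hlp : l • p = b - g := smul_inv_smul₀ (ne_of_gt hl) _
      rw [← hrep, hlp]
      abel
  · exfalso
    obtain ⟨conv, comp⟩ := selSum_convex_compact (H := H) f H.E
    obtain ⟨L, u, hpu, hSu⟩ := geometric_hahn_banach_point_closed conv comp.isClosed hpS
    set v : V → ℝ := fun x => L (delta x) with hv
    have hpick : ∀ e ∈ H.E, ∃ q : V × V, q.1 ∈ e ∧ q.2 ∈ e ∧ f q.1 - f q.2 = Me e f ∧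
        ∀ x ∈ e, ∀ y ∈ e, f x - f y = Me e f → v q.1 - v q.2 ≤ v x - v y := by
      intro e he
      have hene := H.e_nonempty e he
      set Ae : Finset (V × V) := (e ×ˢ e).filter (fun q => f q.1 - f q.2 = Me e f) with hAe
      have hAene : Ae.Nonempty := by
        obtain ⟨x, hx, y, hy, hxy⟩ := exists_Me_pair hene f
        exact ⟨(x, y), Finset.mem_filter.2 ⟨Finset.mk_mem_product hx hy, hxy.symm⟩⟩
      obtain ⟨q, hq, hqmin⟩ := Finset.exists_min_image Ae (fun q : V × V => v q.1 - v q.2) hAene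
      rw [hAe, Finset.mem_filter] at hq
      exact ⟨q, (Finset.mem_product.1 hq.1).1, (Finset.mem_product.1 hq.1).2, hq.2,
        fun x hx y hy hxy => hqmin (x, y)
          (Finset.mem_filter.2 ⟨Finset.mk_mem_product hx hy, hxy⟩)⟩
    have : Inhabited (V × V) := ⟨(Classical.arbitrary V, Classical.arbitrary V)⟩
    choose! q hq1 hq2 hq3 hq4 using hpick
    set s₀ : V → ℝ := ∑ e ∈ H.E, (H.w e * Me e f) • (delta (q e).1 - delta (q e).2) with hs₀
    have hs₀S : s₀ ∈ selSum H f H.E :=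
      ⟨fun e => delta (q e).1 - delta (q e).2, fun e he =>
        ⟨pair_mem_Bp (hq1 e he) (hq2 e he), by rw [dot_delta_sub]; exact hq3 e he⟩, rfl⟩
    have hsep : L p < L s₀ := lt_trans hpu (hSu s₀ hs₀S)
    have hLp : L p = l⁻¹ * dot (b - g) v := by rw [clm_eq_dot, hp, dot_smul]
    have hLs₀ : L s₀ = ∑ e ∈ H.E, (H.w e * Me e f) * (v (q e).1 - v (q e).2) := by
      rw [clm_eq_dot, hs₀, dot_sum]
      exact Finset.sum_congr rfl fun e _ => by rw [dot_smul, dot_delta_sub]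
    obtain ⟨t₀, ht₀, hbnd⟩ := exists_uniform H.E
      (fun e t => Me e (f - t • v) ≤ Me e f - t * (v (q e).1 - v (q e).2))
      (fun e he => danskin_bound (H.e_nonempty e he) f v (hq1 e he) (hq2 e he)
        (hq3 e he) (hq4 e he))
    set Dv : V → ℝ := fun x => deg H x * v x with hDv
    set X : ℝ := dot (b - g) v with hX
    set Sg : ℝ := ∑ e ∈ H.E, (H.w e * Me e f) * (v (q e).1 - v (q e).2) with hSg
    set ε : ℝ := Sg - l⁻¹ * X with hε
    have hεpos : 0 < ε := by
      have := hsep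
      rw [hLp, hLs₀] at this
      simp only [hε, hSg, hX]
      linarith
    set C : ℝ := inn H Dv Dv / (2 * l) + (1 / 2) * ∑ e ∈ H.E,
      H.w e * (v (q e).1 - v (q e).2) ^ 2 with hC
    have hC0 : 0 ≤ C := add_nonneg (div_nonneg (inn_nonneg hdeg _) (by linarith))
      (mul_nonneg (by norm_num) (Finset.sum_nonneg fun e he =>
        mul_nonneg (H.w_pos e he).le (sq_nonneg _)))
    have hC1 : (0:ℝ) < C + 1 := by linarith
    set t : ℝ := min t₀ (ε / (C + 1)) with ht
    have htpos : 0 < t := lt_min ht₀ (div_pos hεpos hC1)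
    have htt₀ : t ≤ t₀ := min_le_left _ _
    have ht' : t * (C + 1) ≤ ε := (le_div_iff₀ hC1).1 (min_le_right _ _)
    set gt : V → ℝ := g - t • Dv with hgt
    have hDinvgt : Dinv H gt = f - t • v := by
      funext x
      rw [hgt, hf]
      simp only [Dinv, Pi.sub_apply, Pi.smul_apply, smul_eq_mul, hDv]
      have hdx : deg H x ≠ 0 := (hdeg x).ne'
      field_simp
    have hbgt : b - gt = (b - g) + t • Dv := by rw [hgt]; abel
    have hquad : nrm H (b - gt) ^ 2
        = nrm H (b - g) ^ 2 + 2 * t * inn H (b - g) Dv + t ^ 2 * inn H Dv Dv := by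
      rw [nrm_sq_eq hdeg, nrm_sq_eq hdeg, hbgt, inn_add_smul]
    have hinnDv : inn H (b - g) Dv = X := by
      rw [hX]
      unfold inn dot
      refine Finset.sum_congr rfl fun x _ => ?_
      simp only [hDv]
      rw [mul_div_assoc, mul_comm (deg H x) (v x), mul_div_assoc,
        div_self (hdeg x).ne', mul_one]
    have hQt : Qform H (Dinv H gt)
        ≤ Qform H f - t * Sg + t ^ 2 * ((1/2) * ∑ e ∈ H.E,
          H.w e * (v (q e).1 - v (q e).2) ^ 2) := by
      rw [hDinvgt, Qform_eq, Qform_eq (h := f)]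
      have hsum : ∑ e ∈ H.E, H.w e * Me e (f - t • v) ^ 2
          ≤ ∑ e ∈ H.E, (H.w e * Me e f ^ 2
              - 2 * t * (H.w e * Me e f * (v (q e).1 - v (q e).2))
              + t ^ 2 * (H.w e * (v (q e).1 - v (q e).2) ^ 2)) := by
        refine Finset.sum_le_sum fun e he => ?_
        have h1 := hbnd t htpos htt₀ e he
        have h2 : 0 ≤ Me e (f - t • v) := Me_nonneg (H.e_nonempty e he) _
        have hw := (H.w_pos e he).le
        nlinarith [mul_le_mul_of_nonneg_left (mul_self_le_mul_self h2 h1) hw]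
      rw [Finset.sum_add_distrib, Finset.sum_sub_distrib, ← Finset.mul_sum,
        ← Finset.mul_sum] at hsum
      rw [← hSg] at hsum
      linarith
    have hsplit : (nrm H (b - g) ^ 2 + 2 * t * X + t ^ 2 * inn H Dv Dv) / (2 * l)
        = nrm H (b - g) ^ 2 / (2 * l) + t * (l⁻¹ * X) + t ^ 2 * (inn H Dv Dv / (2 * l)) := by
      field_simp
    have hFt : Ffun H l b gt ≤ Ffun H l b g - t * ε + t ^ 2 * C := by
      unfold Ffun
      rw [hquad, hinnDv, hsplit, ← hf, hε, hC]
      linarith [hQt]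
    have hge := hmin gt
    have h1 : 0 ≤ -(t * ε) + t ^ 2 * C := by linarith
    have h2 : t * (t * (C + 1)) ≤ t * ε := mul_le_mul_of_nonneg_left ht' htpos.le
    have h3 : 0 < t * t := mul_pos htpos htpos
    exact aux_contra h3 h2 h1

end Aux6
/-- For every `λ > 0` and `b ∈ ℝ^V` there is a unique `g` with
`b ∈ g + λ𝓛(g)`, and this `g` is the unique minimizer of
`g ↦ ‖b − g‖²/(2λ) + Q(D⁻¹g)`. -/
theorem stmt0 [Nonempty V] (H : Hypergraph V) (hconn : Connected H)
    (hdeg : ∀ x : V, 0 < deg H x) (l : ℝ) (hl : 0 < l) (b : V → ℝ) :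
    ∃ g : V → ℝ,
      (∃ h ∈ NL H g, b = g + l • h) ∧
      (∀ g' : V → ℝ, (∃ h ∈ NL H g', b = g' + l • h) → g' = g) ∧
      (∀ g' : V → ℝ, g' ≠ g →
        nrm H (b - g) ^ 2 / (2 * l) + Qform H (Dinv H g)
          < nrm H (b - g') ^ 2 / (2 * l) + Qform H (Dinv H g')) := by
  obtain ⟨g, hgmin⟩ := exists_global_min hdeg hl b
  obtain ⟨h, hh, hb⟩ := min_is_resolvent hdeg hl b g hgmin
  refine ⟨g, ⟨h, hh, hb⟩, ?_, ?_⟩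
  · rintro g' ⟨h', hh', hb'⟩
    by_contra hne
    have h1 : Ffun H l b g' < Ffun H l b g := resolvent_min hdeg hl hh' hb' (Ne.symm hne)
    exact absurd (hgmin g') (not_le.2 h1)
  · intro g' hne
    have h2 := resolvent_min hdeg hl hh hb hne
    unfold Ffun at h2
    exact h2

end HypRicci
end
end

section
/- If f ∈ Lip_w^1(V), then every g ∈ 𝓛(f) satisfies |g(x)| ≤ d_x for all x ∈ V; consequently ‖g‖ ≤ vol(V)^{1/2} for every g ∈ 𝓛(f). -/
open scoped BigOperators

noncomputable section

namespace HypRicci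

variable {V : Type*} [Fintype V] [DecidableEq V]

lemma gdist_le_one (H : Hypergraph V) {e : Finset V} (he : e ∈ H.E) {u v : V}
    (hu : u ∈ e) (hv : v ∈ e) : gdist H u v ≤ 1 := by
  have h1 : chainProp H u v 1 := by
    refine ⟨fun i => if i = 0 then u else v, by simp, by simp, ?_⟩
    intro i hi
    interval_cases i
    simpa using ⟨e, he, hu, hv⟩
  have : hdistN H u v ≤ 1 := Nat.sInf_le h1
  unfold gdist
  exact_mod_cast this

lemma dot_deltas (u v : V) (w : V → ℝ) : dot (delta u - delta v) w = w u - w v := by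
  simp [dot, delta, sub_mul, ite_mul, Finset.sum_sub_distrib]

lemma inn_deltas (H : Hypergraph V) (f : V → ℝ) (u v : V) :
    inn H f (delta u - delta v) = f u / deg H u - f v / deg H v := by
  simp [inn, delta, mul_sub, sub_div, Finset.sum_sub_distrib, mul_ite, mul_one, mul_zero,
    ite_div, zero_div]

lemma Bp_abs_le {e : Finset V} {b : V → ℝ} (hb : b ∈ Bp e) (x : V) :
    |b x| ≤ if x ∈ e then 1 else 0 := by
  have hsub : Bp e ⊆ {b : V → ℝ | ∀ x, |b x| ≤ if x ∈ e then 1 else 0} := by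
    apply convexHull_min
    · rintro b ⟨u, hu, v, hv, rfl⟩ x
      by_cases hxe : x ∈ e
      · simp only [Pi.sub_apply, delta, hxe, if_true]
        split_ifs <;> norm_num
      · have hxu : x ≠ u := fun h => hxe (h ▸ hu)
        have hxv : x ≠ v := fun h => hxe (h ▸ hv)
        simp [Pi.sub_apply, delta, hxu, hxv, hxe]
    · intro p hp q hq a c ha hc hac x
      set t : ℝ := if x ∈ e then 1 else 0 with ht
      have htnn : (0:ℝ) ≤ t := by rw [ht]; split_ifs <;> norm_num
      calc |(a • p + c • q) x| = |a * p x + c * q x| := by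
            simp [Pi.add_apply, Pi.smul_apply, smul_eq_mul]
        _ ≤ |a * p x| + |c * q x| := abs_add_le _ _
        _ = a * |p x| + c * |q x| := by
            rw [abs_mul, abs_mul, abs_of_nonneg ha, abs_of_nonneg hc]
        _ ≤ a * t + c * t :=
            add_le_add (mul_le_mul_of_nonneg_left (hp x) ha)
              (mul_le_mul_of_nonneg_left (hq x) hc)
        _ = t := by rw [← add_mul, hac, one_mul]
  exact hsub hb x

lemma zero_mem_Bp {e : Finset V} (hne : e.Nonempty) : (0 : V → ℝ) ∈ Bp e := by
  obtain ⟨y, hy⟩ := hne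
  exact subset_convexHull ℝ _ ⟨y, hy, y, hy, (sub_self _).symm⟩

lemma Bp_dot_le (H : Hypergraph V) {e : Finset V} (he : e ∈ H.E) (f : V → ℝ)
    (hf : f ∈ Lip1 H) {b : V → ℝ} (hb : b ∈ Bp e) : dot b (Dinv H f) ≤ 1 := by
  have hlin : IsLinearMap ℝ (fun b : V → ℝ => dot b (Dinv H f)) := by
    constructor
    · intro p q; simp [dot, add_mul, Finset.sum_add_distrib]
    · intro c p; simp [dot, Finset.mul_sum, mul_assoc]
  have hsub : Bp e ⊆ {b : V → ℝ | dot b (Dinv H f) ≤ 1} := by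
    apply convexHull_min
    · rintro b ⟨u, hu, v, hv, rfl⟩
      show dot (delta u - delta v) (Dinv H f) ≤ 1
      rw [dot_deltas]
      have h1 : inn H f (delta u - delta v) ≤ gdist H u v := hf u v
      rw [inn_deltas] at h1
      have h2 : gdist H u v ≤ 1 := gdist_le_one H he hu hv
      simpa [Dinv] using h1.trans h2
    · exact convex_halfSpace_le hlin 1
  exact hsub hb

/-- for weighted 1-Lipschitz `f`, every `g ∈ 𝓛(f)` satisfies
`|g(x)| ≤ d_x` and `‖g‖ ≤ vol(V)^{1/2}`. -/
theorem stmt6 [Nonempty V] (H : Hypergraph V) (hconn : Connected H)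
    (hdeg : ∀ x : V, 0 < deg H x) (f : V → ℝ) (hf : f ∈ Lip1 H) :
    ∀ g ∈ NL H f, (∀ x : V, |g x| ≤ deg H x) ∧ nrm H g ≤ Real.sqrt (vol H) := by
  rintro g ⟨b, hb, rfl⟩
  have key : ∀ x : V,
      |(∑ e ∈ H.E, (H.w e * dot (b e) (Dinv H f)) • b e) x| ≤ deg H x := by
    intro x
    have hx : (∑ e ∈ H.E, (H.w e * dot (b e) (Dinv H f)) • b e) x
        = ∑ e ∈ H.E, (H.w e * dot (b e) (Dinv H f)) * b e x := by
      simp [Finset.sum_apply]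
    rw [hx]
    calc |∑ e ∈ H.E, (H.w e * dot (b e) (Dinv H f)) * b e x|
        ≤ ∑ e ∈ H.E, |(H.w e * dot (b e) (Dinv H f)) * b e x| :=
          Finset.abs_sum_le_sum_abs _ _
      _ ≤ ∑ e ∈ H.E, (if x ∈ e then H.w e else 0) := by
          apply Finset.sum_le_sum
          intro e he
          have hw := H.w_pos e he
          have hc0 : 0 ≤ dot (b e) (Dinv H f) := by
            have := (hb e he).2 0 (zero_mem_Bp (H.e_nonempty e he))
            simpa [dot] using this
          have hc1 : dot (b e) (Dinv H f) ≤ 1 :=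
            Bp_dot_le H he f hf (hb e he).1
          have habs := Bp_abs_le (hb e he).1 x
          have h1 : |(H.w e * dot (b e) (Dinv H f)) * b e x|
              = H.w e * dot (b e) (Dinv H f) * |b e x| := by
            rw [abs_mul, abs_of_nonneg (mul_nonneg hw.le hc0)]
          rw [h1]
          calc H.w e * dot (b e) (Dinv H f) * |b e x|
              ≤ H.w e * 1 * (if x ∈ e then 1 else 0) := by
                apply mul_le_mul
                · exact mul_le_mul_of_nonneg_left hc1 hw.le
                · exact habs
                · exact abs_nonneg _
                · positivity
            _ = (if x ∈ e then H.w e else 0) := by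
                rw [mul_one]; split_ifs <;> simp
      _ = deg H x := rfl
  refine ⟨key, ?_⟩
  set g := ∑ e ∈ H.E, (H.w e * dot (b e) (Dinv H f)) • b e with hg
  have hinn : inn H g g ≤ vol H := by
    unfold inn vol
    apply Finset.sum_le_sum
    intro x _
    rw [div_le_iff₀ (hdeg x)]
    have := key x
    calc g x * g x = |g x| * |g x| := (abs_mul_abs_self _).symm
      _ ≤ deg H x * deg H x :=
          mul_le_mul this this (abs_nonneg _) (hdeg x).le
  exact Real.sqrt_le_sqrt hinn

end HypRicci
end
end
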